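/- Let R = ((ℓ_1,…,ℓ_d),(u_1,…,u_{d+1})) be a constructible special point data of level d with q nodes, let ℓ ∈ {1,…,q}, and let (v_1,…,v_{d+1}) be the reordering of (u_1,…,u_{d+1}) that is increasing for the relation <_ℓ relative to the node labels of R. Then a^ℓ_{v_1}(R) − a^ℓ_{v_{d+1}}(R) ≤ 1; furthermore, equality holds if and only if there exists i ∈ {1,…,d} such that ℓ_i = ℓ. -/
import Mathlib


/-- The relation `u <_ℓ u'` on `{1,2}^d`, relative to node labels `lab : Fin d → ℕ`. -/
def ltNode {d : ℕ} (lab : Fin d → ℕ) (ℓ : ℕ) (u u' : Fin d → ℕ) : Prop :=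
  (∃ k₀ : Fin d, lab k₀ = ℓ ∧ u k₀ = 2 ∧ u' k₀ = 1 ∧
      ∀ k : Fin d, k₀ < k → lab k = ℓ → u k = u' k) ∨
  ((∀ k : Fin d, lab k = ℓ → u k = u' k) ∧
    ∃ k₀ : Fin d, lab k₀ ≠ ℓ ∧ u k₀ = 1 ∧ u' k₀ = 2 ∧
      ∀ k : Fin d, k < k₀ → u k = u' k)

/-- Constructible special point data of level `d` with `q` nodes. -/
inductive Constructible (q : ℕ) :
    (d : ℕ) → (Fin d → ℕ) → (Fin (d + 1) → Fin d → ℕ) → Prop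
  | base (ℓ : ℕ) (h1 : 1 ≤ ℓ) (hq : ℓ ≤ q) :
      Constructible q 1 (fun _ => ℓ) ![![1], ![2]]
  | step {d : ℕ} {lab : Fin d → ℕ} {u : Fin (d + 1) → Fin d → ℕ}
      (hR : Constructible q d lab u) (ℓ : ℕ) (h1 : 1 ≤ ℓ) (hq : ℓ ≤ q)
      (v : Fin (d + 1) → Fin d → ℕ) (σ : Equiv.Perm (Fin (d + 1)))
      (hv : ∀ j, v j = u (σ j))
      (hsort : ∀ i j : Fin (d + 1), i < j → ltNode lab ℓ (v i) (v j))
      (h : ℕ) (hh1 : 1 ≤ h) (hh2 : h ≤ d + 1) :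
      Constructible q (d + 1) (Fin.snoc lab ℓ)
        (fun j : Fin (d + 2) =>
          if hj : (j : ℕ) < h then Fin.snoc (v ⟨(j : ℕ), by omega⟩) 1
          else Fin.snoc (v ⟨(j : ℕ) - 1, by omega⟩) 2)

/-- `a^ℓ_u(R)`: the number of `k` with `ℓ_k = ℓ` and `u(k) = 2`. -/
def aCount {d : ℕ} (lab : Fin d → ℕ) (ℓ : ℕ) (u : Fin d → ℕ) : ℕ :=
  (Finset.univ.filter (fun k : Fin d => lab k = ℓ ∧ u k = 2)).card

/-- `|a_u(R)|`: the number of `k` with `u(k) = 2`. -/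
def aTot {d : ℕ} (u : Fin d → ℕ) : ℕ :=
  (Finset.univ.filter (fun k : Fin d => u k = 2)).card

/-- Lexicographic order on tuples, comparing at the smallest coordinate where they differ. -/
def lexLt {d : ℕ} (u u' : Fin d → ℕ) : Prop :=
  ∃ k₀ : Fin d, (∀ k : Fin d, k < k₀ → u k = u' k) ∧ u k₀ < u' k₀

lemma ltNode_irrefl {d : ℕ} (lab : Fin d → ℕ) (ℓ : ℕ) (x : Fin d → ℕ) :
    ¬ ltNode lab ℓ x x := by
  rintro (⟨k₀, _, h2, h1, _⟩ | ⟨_, k₀, _, h1, h2, _⟩) <;> omega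

lemma ltNode_asymm {d : ℕ} {lab : Fin d → ℕ} {ℓ : ℕ} {a b : Fin d → ℕ}
    (h1 : ltNode lab ℓ a b) (h2 : ltNode lab ℓ b a) : False := by
  rcases h1 with ⟨k₀, hl₀, ha₀, hb₀, hc₀⟩ | ⟨hag, k₀, hl₀, ha₀, hb₀, hc₀⟩
  · rcases h2 with ⟨k₁, hl₁, ha₁, hb₁, hc₁⟩ | ⟨hag, _⟩
    · rcases lt_trichotomy k₀ k₁ with hlt | rfl | hlt
      · have := hc₀ k₁ hlt hl₁; omega
      · omega
      · have := hc₁ k₀ hlt hl₀; omega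
    · have := hag k₀ hl₀; omega
  · rcases h2 with ⟨k₁, hl₁, ha₁, hb₁, hc₁⟩ | ⟨hag', k₁, hl₁, ha₁, hb₁, hc₁⟩
    · have := hag k₁ hl₁; omega
    · rcases lt_trichotomy k₀ k₁ with hlt | rfl | hlt
      · have := hc₁ k₀ hlt; omega
      · omega
      · have := hc₀ k₁ hlt; omega

lemma aCount_eq_zero {d : ℕ} {lab : Fin d → ℕ} {ℓ : ℕ} (h : ∀ k, lab k ≠ ℓ)
    (x : Fin d → ℕ) : aCount lab ℓ x = 0 := by
  simp only [aCount, Finset.card_eq_zero, Finset.filter_eq_empty_iff]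
  exact fun k _ hk => h k hk.1

lemma aCount_snoc {d : ℕ} (lab : Fin d → ℕ) (ℓ ℓ' : ℕ) (b : Fin d → ℕ) (e : ℕ) :
    aCount (Fin.snoc lab ℓ') ℓ (Fin.snoc b e) =
      aCount lab ℓ b + (if ℓ' = ℓ ∧ e = 2 then 1 else 0) := by
  classical
  simp only [aCount, Finset.card_filter]
  rw [Fin.sum_univ_castSucc]
  simp [Fin.snoc_castSucc, Fin.snoc_last]

lemma aCount_one (lab : Fin 1 → ℕ) (ℓ : ℕ) (x : Fin 1 → ℕ) :
    aCount lab ℓ x = if lab 0 = ℓ ∧ x 0 = 2 then 1 else 0 := by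
  simp only [aCount, Finset.card_filter]
  rw [Fin.sum_univ_one]

lemma ltNode_proj {d : ℕ} {lab : Fin d → ℕ} {ℓ ℓ' : ℕ} (hne : ℓ' ≠ ℓ)
    {b b' : Fin d → ℕ} {e e' : ℕ}
    (h : ltNode (Fin.snoc lab ℓ') ℓ (Fin.snoc b e) (Fin.snoc b' e'))
    (hbb : b ≠ b') : ltNode lab ℓ b b' := by
  rcases h with ⟨k₀, hl₀, ha₀, hb₀, hc₀⟩ | ⟨hag, k₀, hl₀, ha₀, hb₀, hc₀⟩
  · have hk₀ : k₀ ≠ Fin.last d := by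
      rintro rfl; rw [Fin.snoc_last] at hl₀; exact hne hl₀
    obtain ⟨k, rfl⟩ := Fin.exists_castSucc_eq.mpr hk₀
    rw [Fin.snoc_castSucc] at hl₀ ha₀ hb₀
    left
    refine ⟨k, hl₀, ha₀, hb₀, fun k' hk' hl' => ?_⟩
    have := hc₀ (Fin.castSucc k') (by exact_mod_cast Fin.castSucc_lt_castSucc_iff.mpr hk')
      (by rwa [Fin.snoc_castSucc])
    rwa [Fin.snoc_castSucc, Fin.snoc_castSucc] at this
  · have hk₀ : k₀ ≠ Fin.last d := by
      rintro rfl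
      apply hbb; funext k
      have := hc₀ (Fin.castSucc k) (Fin.castSucc_lt_last k)
      rwa [Fin.snoc_castSucc, Fin.snoc_castSucc] at this
    obtain ⟨k, rfl⟩ := Fin.exists_castSucc_eq.mpr hk₀
    rw [Fin.snoc_castSucc] at hl₀ ha₀ hb₀
    right
    refine ⟨fun k' hl' => ?_, k, hl₀, ha₀, hb₀, fun k' hk' => ?_⟩
    · have := hag (Fin.castSucc k') (by rwa [Fin.snoc_castSucc])
      rwa [Fin.snoc_castSucc, Fin.snoc_castSucc] at this
    · have := hc₀ (Fin.castSucc k') (by exact_mod_cast Fin.castSucc_lt_castSucc_iff.mpr hk')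
      rwa [Fin.snoc_castSucc, Fin.snoc_castSucc] at this

lemma ltNode_lift {d : ℕ} {lab : Fin d → ℕ} {ℓ : ℕ} (ℓ' : ℕ) {b b' : Fin d → ℕ} (e : ℕ)
    (h : ltNode lab ℓ b b') :
    ltNode (Fin.snoc lab ℓ') ℓ (Fin.snoc b e) (Fin.snoc b' e) := by
  rcases h with ⟨k₀, hl₀, ha₀, hb₀, hc₀⟩ | ⟨hag, k₀, hl₀, ha₀, hb₀, hc₀⟩
  · left
    refine ⟨Fin.castSucc k₀, by rwa [Fin.snoc_castSucc], by rwa [Fin.snoc_castSucc],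
      by rwa [Fin.snoc_castSucc], fun k hk hl => ?_⟩
    rcases eq_or_ne k (Fin.last d) with rfl | hkl
    · simp [Fin.snoc_last]
    · obtain ⟨k', rfl⟩ := Fin.exists_castSucc_eq.mpr hkl
      rw [Fin.snoc_castSucc] at hl ⊢
      rw [Fin.snoc_castSucc]
      exact hc₀ k' (by exact_mod_cast Fin.castSucc_lt_castSucc_iff.mp hk) hl
  · right
    constructor
    · intro k hl
      rcases eq_or_ne k (Fin.last d) with rfl | hkl
      · simp [Fin.snoc_last]
      · obtain ⟨k', rfl⟩ := Fin.exists_castSucc_eq.mpr hkl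
        rw [Fin.snoc_castSucc] at hl ⊢
        rw [Fin.snoc_castSucc]
        exact hag k' hl
    · refine ⟨Fin.castSucc k₀, by rwa [Fin.snoc_castSucc], by rwa [Fin.snoc_castSucc],
        by rwa [Fin.snoc_castSucc], fun k hk => ?_⟩
      have hkl : k ≠ Fin.last d := by
        rintro rfl
        exact absurd (lt_of_lt_of_le hk (Fin.le_last _)) (lt_irrefl _)
      obtain ⟨k', rfl⟩ := Fin.exists_castSucc_eq.mpr hkl
      rw [Fin.snoc_castSucc, Fin.snoc_castSucc]
      exact hc₀ k' (by exact_mod_cast Fin.castSucc_lt_castSucc_iff.mp hk)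

lemma ltNode_cross {d : ℕ} (lab : Fin d → ℕ) (ℓ : ℕ) (b b' : Fin d → ℕ) :
    ltNode (Fin.snoc lab ℓ) ℓ (Fin.snoc b 2) (Fin.snoc b' 1) := by
  left
  refine ⟨Fin.last d, by rw [Fin.snoc_last], by rw [Fin.snoc_last], by rw [Fin.snoc_last],
    fun k hk _ => absurd (lt_of_lt_of_le hk (Fin.le_last _)) (lt_irrefl _)⟩

lemma sorted_ends_eq {n m : ℕ} {w : Fin (n + 1) → Fin m → ℕ} {lab : Fin m → ℕ} {ℓ : ℕ}
    {v v' : Fin (n + 1) → Fin m → ℕ} {σ σ' : Equiv.Perm (Fin (n + 1))}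
    (hv : ∀ j, v j = w (σ j)) (hv' : ∀ j, v' j = w (σ' j))
    (hs : ∀ i j, i < j → ltNode lab ℓ (v i) (v j))
    (hs' : ∀ i j, i < j → ltNode lab ℓ (v' i) (v' j)) :
    v 0 = v' 0 ∧ v (Fin.last n) = v' (Fin.last n) := by
  constructor
  · by_cases he : σ 0 = σ' 0
    · rw [hv, hv', he]
    · exfalso
      have hj : σ'.symm (σ 0) ≠ 0 := by
        intro hh
        exact he (by simpa using (congrArg σ' hh))
      have e1 : v' (σ'.symm (σ 0)) = v 0 := by
        rw [hv' (σ'.symm (σ 0)), Equiv.apply_symm_apply]; exact (hv 0).symm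
      have h1 : ltNode lab ℓ (v' 0) (v 0) := by
        rw [← e1]; exact hs' 0 _ (Fin.pos_of_ne_zero hj)
      have hi : σ.symm (σ' 0) ≠ 0 := by
        intro hh
        have := congrArg σ hh; simp at this; exact he this.symm
      have e2 : v (σ.symm (σ' 0)) = v' 0 := by
        rw [hv (σ.symm (σ' 0)), Equiv.apply_symm_apply]; exact (hv' 0).symm
      have h2 : ltNode lab ℓ (v 0) (v' 0) := by
        rw [← e2]; exact hs 0 _ (Fin.pos_of_ne_zero hi)
      exact ltNode_asymm h1 h2
  · by_cases he : σ (Fin.last n) = σ' (Fin.last n)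
    · rw [hv, hv', he]
    · exfalso
      have hj : σ'.symm (σ (Fin.last n)) ≠ Fin.last n := by
        intro hh
        exact he (by simpa using (congrArg σ' hh))
      have e1 : v' (σ'.symm (σ (Fin.last n))) = v (Fin.last n) := by
        rw [hv' _, Equiv.apply_symm_apply]; exact (hv _).symm
      have h1 : ltNode lab ℓ (v (Fin.last n)) (v' (Fin.last n)) := by
        rw [← e1]; exact hs' _ _ (lt_of_le_of_ne (Fin.le_last _) hj)
      have hi : σ.symm (σ' (Fin.last n)) ≠ Fin.last n := by
        intro hh
        have := congrArg σ hh; simp at this; exact he this.symm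
      have e2 : v (σ.symm (σ' (Fin.last n))) = v' (Fin.last n) := by
        rw [hv _, Equiv.apply_symm_apply]; exact (hv' _).symm
      have h2 : ltNode lab ℓ (v' (Fin.last n)) (v (Fin.last n)) := by
        rw [← e2]; exact hs _ _ (lt_of_le_of_ne (Fin.le_last _) hi)
      exact ltNode_asymm h1 h2

def wIdx (d h : ℕ) (hh2 : h ≤ d + 1) (k : Fin (d + 2)) : Fin (d + 1) :=
  ⟨if (k : ℕ) < h then (k : ℕ) else (k : ℕ) - 1, by have := k.isLt; split <;> omega⟩

def wEps (h : ℕ) {d : ℕ} (k : Fin (d + 2)) : ℕ := if (k : ℕ) < h then 1 else 2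

lemma wIdx_val (d h : ℕ) (hh2 : h ≤ d + 1) (k : Fin (d + 2)) :
    (wIdx d h hh2 k : ℕ) = if (k : ℕ) < h then (k : ℕ) else (k : ℕ) - 1 := rfl

lemma wIdx_eq_pred (d h : ℕ) (hh1 : 1 ≤ h) (hh2 : h ≤ d + 1) (k : Fin (d + 2))
    (hk : (wIdx d h hh2 k : ℕ) = h - 1) : (k : ℕ) = h - 1 ∨ (k : ℕ) = h := by
  rw [wIdx_val] at hk; have := k.isLt; split at hk <;> omega

lemma wIdx_inj (d h : ℕ) (hh1 : 1 ≤ h) (hh2 : h ≤ d + 1) {a b : Fin (d + 2)}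
    (hab : wIdx d h hh2 a = wIdx d h hh2 b) :
    a = b ∨ (((a : ℕ) = h - 1 ∧ (b : ℕ) = h) ∨ ((a : ℕ) = h ∧ (b : ℕ) = h - 1)) := by
  have h1 := congrArg Fin.val hab
  rw [wIdx_val, wIdx_val] at h1
  have ha := a.isLt; have hb := b.isLt
  split_ifs at h1 with h2 h3 h3
  · left; exact Fin.ext h1
  · right; left; omega
  · right; right; omega
  · left; exact Fin.ext (by omega)

def pskip {d : ℕ} (P : ℕ) (j : Fin (d + 1)) : Fin (d + 2) :=
  if (j : ℕ) < P then ⟨(j : ℕ), by have := j.isLt; omega⟩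
  else ⟨(j : ℕ) + 1, by have := j.isLt; omega⟩

lemma pskip_val {d : ℕ} (P : ℕ) (j : Fin (d + 1)) :
    (pskip P j : ℕ) = if (j : ℕ) < P then (j : ℕ) else (j : ℕ) + 1 := by
  unfold pskip; split <;> rfl

lemma pskip_strictMono {d : ℕ} (P : ℕ) : StrictMono (pskip (d := d) P) := by
  intro a b hab
  rw [Fin.lt_def] at hab ⊢
  rw [pskip_val, pskip_val]
  split_ifs <;> omega

lemma pskip_ne {d : ℕ} (P : ℕ) (j : Fin (d + 1)) : (pskip P j : ℕ) ≠ P := by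
  rw [pskip_val]; split <;> omega

lemma pskip_zero {d : ℕ} (P : ℕ) (hP : 1 ≤ P) : pskip (d := d) P 0 = 0 := by
  apply Fin.ext
  rw [pskip_val, if_pos (show ((0 : Fin (d + 1)) : ℕ) < P by show 0 < P; omega)]
  rfl

theorem constructible_main {q d : ℕ} {lab : Fin d → ℕ} {u : Fin (d + 1) → Fin d → ℕ}
    (hR : Constructible q d lab u) :
    ∀ (ℓ : ℕ) (v : Fin (d + 1) → Fin d → ℕ) (σ : Equiv.Perm (Fin (d + 1))),
      (∀ j, v j = u (σ j)) →
      (∀ i j : Fin (d + 1), i < j → ltNode lab ℓ (v i) (v j)) →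
      (aCount lab ℓ (v 0) : ℤ) - (aCount lab ℓ (v (Fin.last d)) : ℤ) ≤ 1 ∧
      ((aCount lab ℓ (v 0) : ℤ) - (aCount lab ℓ (v (Fin.last d)) : ℤ) = 1 ↔
        ∃ i : Fin d, lab i = ℓ) := by
  induction hR with
  | base ℓ₁ hb1 hbq =>
    intro ℓ v σ hv hsort
    have hlast : (Fin.last 1 : Fin 2) = 1 := rfl
    by_cases hc : ℓ₁ = ℓ
    · subst hc
      have hf2 : ∀ x : Fin 2, x = 0 ∨ x = 1 := by decide
      have hσ0 : σ 0 = 1 := by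
        rcases hf2 (σ 0) with h0 | h0
        · exfalso
          have hσ1 : σ 1 = 1 := by
            rcases hf2 (σ 1) with h1 | h1
            · exact absurd (σ.injective (h0.trans h1.symm)) (by decide)
            · exact h1
          have hs := hsort 0 1 (by decide)
          rw [hv 0, hv 1, h0, hσ1] at hs
          simp only [Matrix.cons_val_zero, Matrix.cons_val_one, Matrix.head_cons] at hs
          rcases hs with ⟨k₀, _, ha, _, _⟩ | ⟨_, k₀, hl, _, _, _⟩
          · have hk : k₀ = 0 := Subsingleton.elim _ _
            rw [hk] at ha
            simp at ha
          · exact hl rfl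
        · exact h0
      have hσ1 : σ 1 = 0 := by
        rcases hf2 (σ 1) with h1 | h1
        · exact h1
        · exact absurd (σ.injective (hσ0.trans h1.symm)) (by decide)
      have hv0 : v 0 = ![2] := by rw [hv 0, hσ0]; simp
      have hv1 : v (Fin.last 1) = ![1] := by rw [hlast, hv 1, hσ1]; simp
      have e1 : aCount (fun _ : Fin 1 => ℓ₁) ℓ₁ ![2] = 1 := by rw [aCount_one]; norm_num
      have e2 : aCount (fun _ : Fin 1 => ℓ₁) ℓ₁ ![1] = 0 := by rw [aCount_one]; norm_num
      rw [hv0, hv1, e1, e2]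
      refine ⟨by norm_num, ⟨fun _ => ⟨0, rfl⟩, fun _ => by norm_num⟩⟩
    · have hz : ∀ x, aCount (fun _ : Fin 1 => ℓ₁) ℓ x = 0 :=
        fun x => aCount_eq_zero (fun k => hc) x
      rw [hz, hz]
      refine ⟨by norm_num, ⟨fun habs => by norm_num at habs, ?_⟩⟩
      rintro ⟨i, hi⟩
      exact absurd hi hc
  | step hR0 ℓ' hb1 hbq v₀ σ₀ hv₀ hsort₀ h hh1 hh2 ih =>
    intro ℓ v σ hv hsort
    rename_i d lab u
    -- rewrite v in snoc form
    have hvk : ∀ j : Fin (d + 2),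
        v j = Fin.snoc (v₀ (wIdx d h hh2 (σ j))) (wEps h (σ j)) := by
      intro j
      rw [hv j]
      have hlt := (σ j).isLt
      by_cases hk : ((σ j : ℕ) < h)
      · have hidx : wIdx d h hh2 (σ j) = ⟨(σ j : ℕ), by omega⟩ :=
          Fin.ext (by rw [wIdx_val, if_pos hk])
        have heps : wEps h (σ j) = 1 := if_pos hk
        rw [hidx, heps]
        simp only [dif_pos hk]
      · have hidx : wIdx d h hh2 (σ j) = ⟨(σ j : ℕ) - 1, by omega⟩ :=
          Fin.ext (by rw [wIdx_val, if_neg hk])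
        have heps : wEps h (σ j) = 2 := if_neg hk
        rw [hidx, heps]
        simp only [dif_neg hk]
    have hb₀lt : h - 1 < d + 1 := by omega
    by_cases hℓcase : ℓ' = ℓ
    · -- the sorted order is (v_{h-1}·2, ..., v_d·2, v_0·1, ..., v_{h-1}·1)
      subst hℓcase
      have hc2 : h < d + 2 := by omega
      set τ : Equiv.Perm (Fin (d + 2)) := Equiv.addRight (⟨h, hc2⟩ : Fin (d + 2)) with hτdef
      have hτ : ∀ j : Fin (d + 2),
          ((τ j : Fin (d + 2)) : ℕ) =
            if (j : ℕ) + h < d + 2 then (j : ℕ) + h else (j : ℕ) + h - (d + 2) := by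
        intro j
        have hj := j.isLt
        show ((j + (⟨h, hc2⟩ : Fin (d + 2)) : Fin (d + 2)) : ℕ) = _
        rw [Fin.add_def]
        show ((j : ℕ) + h) % (d + 2) = _
        split
        · exact Nat.mod_eq_of_lt (by omega)
        · rw [Nat.mod_eq_sub_mod (by omega)]
          exact Nat.mod_eq_of_lt (by omega)
      have hcomp : ∀ j : Fin (d + 2),
          ((j : ℕ) + h < d + 2 ∧ (wIdx d h hh2 (τ j) : ℕ) = (j : ℕ) + h - 1 ∧
            wEps h (τ j) = 2) ∨
          (d + 2 ≤ (j : ℕ) + h ∧ (wIdx d h hh2 (τ j) : ℕ) = (j : ℕ) + h - (d + 2) ∧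
            wEps h (τ j) = 1) := by
        intro j
        have hjv := hτ j
        have hj := j.isLt
        by_cases hcc : (j : ℕ) + h < d + 2
        · left
          refine ⟨hcc, ?_, ?_⟩
          · rw [wIdx_val, hjv, if_pos hcc, if_neg (by omega)]
          · show (if ((τ j : Fin (d + 2)) : ℕ) < h then 1 else 2) = 2
            rw [hjv, if_pos hcc, if_neg (by omega)]
        · right
          refine ⟨by omega, ?_, ?_⟩
          · rw [wIdx_val, hjv, if_neg hcc, if_pos (by omega)]
          · show (if ((τ j : Fin (d + 2)) : ℕ) < h then 1 else 2) = 1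
            rw [hjv, if_neg hcc, if_pos (by omega)]
      -- canonical sorted enumeration
      have hcsort : ∀ i j : Fin (d + 2), i < j →
          ltNode (Fin.snoc lab ℓ') ℓ'
            (Fin.snoc (v₀ (wIdx d h hh2 (τ i))) (wEps h (τ i)))
            (Fin.snoc (v₀ (wIdx d h hh2 (τ j))) (wEps h (τ j))) := by
        intro i j hij
        have hijv : (i : ℕ) < (j : ℕ) := hij
        rcases hcomp i with ⟨hi1, hi2, hi3⟩ | ⟨hi1, hi2, hi3⟩ <;>
          rcases hcomp j with ⟨hj1, hj2, hj3⟩ | ⟨hj1, hj2, hj3⟩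
        · rw [hi3, hj3]
          exact ltNode_lift ℓ' 2
            (hsort₀ _ _ (by rw [Fin.lt_def, hi2, hj2]; omega))
        · rw [hi3, hj3]
          exact ltNode_cross _ _ _ _
        · exact absurd hj1 (by omega)
        · rw [hi3, hj3]
          exact ltNode_lift ℓ' 1
            (hsort₀ _ _ (by rw [Fin.lt_def, hi2, hj2]; omega))
      obtain ⟨hfirst, hlast⟩ :=
        sorted_ends_eq
          (w := fun k : Fin (d + 2) => Fin.snoc (v₀ (wIdx d h hh2 k)) (wEps h k))
          (v' := fun j : Fin (d + 2) =>
            Fin.snoc (v₀ (wIdx d h hh2 (τ j))) (wEps h (τ j)))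
          (σ' := τ) hvk (fun _ => rfl) hsort hcsort
      have h0v : ((0 : Fin (d + 2)) : ℕ) = 0 := rfl
      have hlv : ((Fin.last (d + 1) : Fin (d + 2)) : ℕ) = d + 1 := rfl
      set b₀ : Fin (d + 1) := ⟨h - 1, hb₀lt⟩ with hb₀def
      have hc0 : Fin.snoc (v₀ (wIdx d h hh2 (τ 0))) (wEps h (τ 0)) =
          (Fin.snoc (v₀ b₀) 2 : Fin (d + 1) → ℕ) := by
        rcases hcomp 0 with ⟨h1, h2, h3⟩ | ⟨h1, h2, h3⟩
        · have hw : wIdx d h hh2 (τ 0) = b₀ := Fin.ext (by rw [h2, h0v]; show 0 + h - 1 = h - 1; omega)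
          rw [hw, h3]
        · rw [h0v] at h1; omega
      have hcl : Fin.snoc (v₀ (wIdx d h hh2 (τ (Fin.last (d + 1)))))
          (wEps h (τ (Fin.last (d + 1)))) = (Fin.snoc (v₀ b₀) 1 : Fin (d + 1) → ℕ) := by
        rcases hcomp (Fin.last (d + 1)) with ⟨h1, h2, h3⟩ | ⟨h1, h2, h3⟩
        · rw [hlv] at h1; omega
        · have hw : wIdx d h hh2 (τ (Fin.last (d + 1))) = b₀ :=
            Fin.ext (by rw [h2, hlv]; show d + 1 + h - (d + 2) = h - 1; omega)
          rw [hw, h3]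
      rw [hfirst, hc0, hlast, hcl, aCount_snoc, aCount_snoc,
        if_pos (⟨rfl, rfl⟩ : ℓ' = ℓ' ∧ (2 : ℕ) = 2),
        if_neg (by norm_num : ¬(ℓ' = ℓ' ∧ (1 : ℕ) = 2))]
      constructor
      · push_cast; omega
      · constructor
        · intro _
          exact ⟨Fin.last d, by simp⟩
        · intro _
          push_cast; omega
    · -- new label differs from ℓ: reduce to the previous level
      have hinj₀ : Function.Injective v₀ := by
        intro a b hab
        by_contra hne
        rcases lt_or_gt_of_ne hne with hlt | hlt
        · exact ltNode_irrefl lab ℓ' (v₀ b) (by have := hsort₀ a b hlt; rwa [hab] at this)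
        · exact ltNode_irrefl lab ℓ' (v₀ b) (by have := hsort₀ b a hlt; rwa [hab] at this)
      set K1 : Fin (d + 2) := ⟨h - 1, by omega⟩ with hK1def
      set K2 : Fin (d + 2) := ⟨h, by omega⟩ with hK2def
      set b₀ : Fin (d + 1) := ⟨h - 1, hb₀lt⟩ with hb₀def
      have hK12 : K1 ≠ K2 := by
        intro e
        have := congrArg Fin.val e
        rw [hK1def, hK2def] at this
        simp only at this
        omega
      have hne12 : σ.symm K1 ≠ σ.symm K2 := fun e => hK12 (σ.symm.injective e)
      obtain ⟨p, P, hpP, hmem⟩ : ∃ p P : Fin (d + 2), p < P ∧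
          ((σ p = K1 ∧ σ P = K2) ∨ (σ p = K2 ∧ σ P = K1)) := by
        rcases lt_or_gt_of_ne hne12 with hcc | hcc
        · exact ⟨σ.symm K1, σ.symm K2, hcc,
            Or.inl ⟨σ.apply_symm_apply K1, σ.apply_symm_apply K2⟩⟩
        · exact ⟨σ.symm K2, σ.symm K1, hcc,
            Or.inr ⟨σ.apply_symm_apply K2, σ.apply_symm_apply K1⟩⟩
      have hwK1 : wIdx d h hh2 K1 = b₀ := by
        apply Fin.ext
        rw [wIdx_val]
        show (if h - 1 < h then h - 1 else h - 1 - 1) = h - 1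
        rw [if_pos (by omega)]
      have hwK2 : wIdx d h hh2 K2 = b₀ := by
        apply Fin.ext
        rw [wIdx_val]
        show (if h < h then h else h - 1) = h - 1
        rw [if_neg (lt_irrefl h)]
      have hBp : wIdx d h hh2 (σ p) = b₀ := by
        rcases hmem with ⟨e1, _⟩ | ⟨e1, _⟩ <;> rw [e1]
        · exact hwK1
        · exact hwK2
      have hBP : wIdx d h hh2 (σ P) = b₀ := by
        rcases hmem with ⟨_, e2⟩ | ⟨_, e2⟩ <;> rw [e2]
        · exact hwK2
        · exact hwK1
      -- the two duplicates are adjacent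
      have hPp : (P : ℕ) = (p : ℕ) + 1 := by
        by_contra hcon
        have hpPv : (p : ℕ) < (P : ℕ) := hpP
        have hplt : (p : ℕ) + 1 < (P : ℕ) := by omega
        have hPlt := P.isLt
        set j : Fin (d + 2) := ⟨(p : ℕ) + 1, by omega⟩ with hjdef
        have hpj : p < j := by
          rw [Fin.lt_def, hjdef]; show (p : ℕ) < (p : ℕ) + 1; omega
        have hjP : j < P := by
          rw [Fin.lt_def, hjdef]; show (p : ℕ) + 1 < (P : ℕ); omega
        have hjnotK : σ j ≠ K1 ∧ σ j ≠ K2 := by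
          constructor <;> intro e <;> rcases hmem with ⟨e1, e2⟩ | ⟨e1, e2⟩
          · exact (ne_of_lt hpj) (σ.injective (e1.trans e.symm))
          · exact (ne_of_lt hjP) (σ.injective (e.trans e2.symm))
          · exact (ne_of_lt hjP) (σ.injective (e.trans e2.symm))
          · exact (ne_of_lt hpj) (σ.injective (e1.trans e.symm))
        have hBj : wIdx d h hh2 (σ j) ≠ b₀ := by
          intro e
          have hval : (wIdx d h hh2 (σ j) : ℕ) = h - 1 := by
            rw [e, hb₀def]
          rcases wIdx_eq_pred d h hh1 hh2 (σ j) hval with hvv | hvv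
          · exact hjnotK.1 (Fin.ext hvv)
          · exact hjnotK.2 (Fin.ext hvv)
        have l1 := hsort p j hpj
        have l2 := hsort j P hjP
        rw [hvk p, hvk j, hBp] at l1
        rw [hvk j, hvk P, hBP] at l2
        have o1 : ltNode lab ℓ (v₀ b₀) (v₀ (wIdx d h hh2 (σ j))) :=
          ltNode_proj hℓcase l1 (fun e => hBj (hinj₀ e).symm)
        have o2 : ltNode lab ℓ (v₀ (wIdx d h hh2 (σ j))) (v₀ b₀) :=
          ltNode_proj hℓcase l2 (fun e => hBj (hinj₀ e))
        exact ltNode_asymm o1 o2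
      -- build sorted enumeration of the old data
      set τf : Fin (d + 1) → Fin (d + 1) :=
        fun j => wIdx d h hh2 (σ (pskip (P : ℕ) j)) with hτfdef
      have hmemP : ∀ c : Fin (d + 1),
          (σ (pskip (P : ℕ) c) = K1 ∨ σ (pskip (P : ℕ) c) = K2) →
          pskip (P : ℕ) c = p := by
        intro c hcc
        have hcpP : pskip (P : ℕ) c = p ∨ pskip (P : ℕ) c = P := by
          rcases hcc with e | e <;> rcases hmem with ⟨e1, e2⟩ | ⟨e1, e2⟩
          · left; exact σ.injective (e.trans e1.symm)
          · right; exact σ.injective (e.trans e2.symm)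
          · right; exact σ.injective (e.trans e2.symm)
          · left; exact σ.injective (e.trans e1.symm)
        rcases hcpP with e | e
        · exact e
        · exact absurd (congrArg Fin.val e) (pskip_ne _ _)
      have hτinj : Function.Injective τf := by
        intro a b hab
        by_contra hne
        have hps : pskip (P : ℕ) a ≠ pskip (P : ℕ) b :=
          fun e => hne ((pskip_strictMono (P : ℕ)).injective e)
        rw [hτfdef] at hab
        simp only at hab
        rcases wIdx_inj d h hh1 hh2 hab with e | ⟨e1, e2⟩ | ⟨e1, e2⟩
        · exact hps (σ.injective e)
        · have ea : pskip (P : ℕ) a = p := hmemP a (Or.inl (Fin.ext e1))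
          have eb : pskip (P : ℕ) b = p := hmemP b (Or.inr (Fin.ext e2))
          exact hps (ea.trans eb.symm)
        · have ea : pskip (P : ℕ) a = p := hmemP a (Or.inr (Fin.ext e1))
          have eb : pskip (P : ℕ) b = p := hmemP b (Or.inl (Fin.ext e2))
          exact hps (ea.trans eb.symm)
      set τE : Equiv.Perm (Fin (d + 1)) :=
        Equiv.ofBijective τf (Finite.injective_iff_bijective.mp hτinj) with hτEdef
      set x : Fin (d + 1) → Fin d → ℕ := fun j => v₀ (τf j) with hxdef
      have hvx : ∀ j, x j = u ((τE.trans σ₀) j) := fun j => hv₀ (τf j)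
      have hsx : ∀ i j : Fin (d + 1), i < j → ltNode lab ℓ (x i) (x j) := by
        intro i j hij
        have hlt := pskip_strictMono (d := d) (P : ℕ) hij
        have l := hsort _ _ hlt
        rw [hvk (pskip (P : ℕ) i), hvk (pskip (P : ℕ) j)] at l
        exact ltNode_proj hℓcase l (fun e => (ne_of_lt hij) (hτinj (hinj₀ e)))
      obtain ⟨ih1, ih2⟩ := ih ℓ x (τE.trans σ₀) hvx hsx
      -- transfer the conclusion
      have hnotif : ∀ e : ℕ, ¬ (ℓ' = ℓ ∧ e = 2) := fun e hcc => hℓcase hcc.1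
      have hP1 : 1 ≤ (P : ℕ) := by omega
      have e0 : aCount (Fin.snoc lab ℓ') ℓ (v 0) = aCount lab ℓ (x 0) := by
        rw [hvk 0, aCount_snoc, if_neg (hnotif _), add_zero]
        have hx0 : x 0 = v₀ (wIdx d h hh2 (σ 0)) := by
          show v₀ (wIdx d h hh2 (σ (pskip (P : ℕ) 0))) = _
          rw [pskip_zero _ hP1]
        rw [hx0]
      have elast : aCount (Fin.snoc lab ℓ') ℓ (v (Fin.last (d + 1))) =
          aCount lab ℓ (x (Fin.last d)) := by
        rw [hvk (Fin.last (d + 1)), aCount_snoc, if_neg (hnotif _), add_zero]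
        have hxl : x (Fin.last d) = v₀ (wIdx d h hh2 (σ (pskip (P : ℕ) (Fin.last d)))) := rfl
        rw [hxl]
        have hdval : ((Fin.last d : Fin (d + 1)) : ℕ) = d := rfl
        have hlval : ((Fin.last (d + 1) : Fin (d + 2)) : ℕ) = d + 1 := rfl
        by_cases hPd : (P : ℕ) = d + 1
        · -- the skipped position is the last one; use that v p and v P share base
          have hpsl : pskip (P : ℕ) (Fin.last d) = p := by
            apply Fin.ext
            rw [pskip_val, hdval, if_pos (by omega)]
            have := hpP.le
            omega
          have hPeq : (Fin.last (d + 1) : Fin (d + 2)) = P :=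
            Fin.ext (by rw [hlval, hPd])
          rw [hpsl, hBp, hPeq, hBP]
        · have hpsl : pskip (P : ℕ) (Fin.last d) = Fin.last (d + 1) := by
            apply Fin.ext
            rw [pskip_val, hdval, if_neg (by have := P.isLt; omega)]
            rw [hlval]
          rw [hpsl]
      have hlab : (∃ i : Fin (d + 1), (Fin.snoc lab ℓ' : Fin (d + 1) → ℕ) i = ℓ) ↔
          (∃ i : Fin d, lab i = ℓ) := by
        constructor
        · rintro ⟨i, hi⟩
          rcases eq_or_ne i (Fin.last d) with rfl | hne
          · rw [Fin.snoc_last] at hi; exact absurd hi hℓcase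
          · obtain ⟨i', rfl⟩ := Fin.exists_castSucc_eq.mpr hne
            rw [Fin.snoc_castSucc] at hi; exact ⟨i', hi⟩
        · rintro ⟨i, hi⟩
          refine ⟨Fin.castSucc i, ?_⟩
          rw [Fin.snoc_castSucc]
          exact hi
      rw [e0, elast]
      exact ⟨ih1, ih2.trans hlab.symm⟩

/-- If `(v_1,…,v_{d+1})` is the reordering of the tuples of a constructible special point
data that is increasing for `<_ℓ`, then `a^ℓ_{v_1}(R) − a^ℓ_{v_{d+1}}(R) ≤ 1`, with
equality if and only if some node label `ℓ_i` equals `ℓ`. -/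
theorem constructible_aCount_first_last {q d : ℕ} (hq : 1 ≤ q) (hd : 1 ≤ d)
    {lab : Fin d → ℕ} {u : Fin (d + 1) → Fin d → ℕ}
    (hR : Constructible q d lab u) (ℓ : ℕ) (hℓ1 : 1 ≤ ℓ) (hℓq : ℓ ≤ q)
    (v : Fin (d + 1) → Fin d → ℕ) (σ : Equiv.Perm (Fin (d + 1)))
    (hv : ∀ j, v j = u (σ j))
    (hsort : ∀ i j : Fin (d + 1), i < j → ltNode lab ℓ (v i) (v j)) :
    (aCount lab ℓ (v 0) : ℤ) - (aCount lab ℓ (v (Fin.last d)) : ℤ) ≤ 1 ∧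
    ((aCount lab ℓ (v 0) : ℤ) - (aCount lab ℓ (v (Fin.last d)) : ℤ) = 1 ↔
      ∃ i : Fin d, lab i = ℓ) := by
  exact constructible_main hR ℓ v σ hv hsort
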